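/- arXiv:1601.03782 — 2 statements merged into one kernel-verified Lean document; each statement's English description precedes it below -/
import Mathlib

section
/- Only maximally coherent states have maximal robustness of coherence: let d ≥ 2 and let ρ be a state on ℂ^d. Then RoC(ρ) = d − 1 if and only if ρ = ψψ† for some unit vector ψ ∈ ℂ^d with |ψ_j| = 1/√d for every j = 0, …, d−1. -/
open Matrix ComplexOrder

noncomputable section

/-- A state (density matrix): positive semidefinite with trace 1. -/
def IsState {d : ℕ} (ρ : Matrix (Fin d) (Fin d) ℂ) : Prop :=
  ρ.PosSemidef ∧ ρ.trace = 1

/-- The robustness of coherence (with respect to the standard basis). -/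
def RoC {d : ℕ} (ρ : Matrix (Fin d) (Fin d) ℂ) : ℝ :=
  sInf { s : ℝ | 0 ≤ s ∧ ∃ δ : Matrix (Fin d) (Fin d) ℂ,
    IsState δ ∧ δ.IsDiag ∧ ((1 + s) • δ - ρ).PosSemidef }

/-- The ℓ₁-norm of coherence: sum of absolute values of off-diagonal entries. -/
def Cl1 {d : ℕ} (ρ : Matrix (Fin d) (Fin d) ℂ) : ℝ :=
  ∑ i, ∑ j, if i = j then 0 else ‖ρ i j‖

section Helpers

lemma quadForm_expand {d : ℕ} (ρ : Matrix (Fin d) (Fin d) ℂ) (x : Fin d → ℂ) :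
    star x ⬝ᵥ ρ *ᵥ x = ∑ i, ∑ j, (starRingEnd ℂ) (x i) * ρ i j * x j := by
  simp [dotProduct, mulVec, Finset.mul_sum, mul_assoc, mul_comm, mul_left_comm]

lemma quadForm_pair {d : ℕ} (ρ : Matrix (Fin d) (Fin d) ℂ) (i j : Fin d) (a b : ℂ) :
    star (Pi.single i a + Pi.single j b) ⬝ᵥ ρ *ᵥ (Pi.single i a + Pi.single j b) =
      (starRingEnd ℂ) a * ρ i i * a + (starRingEnd ℂ) a * ρ i j * b +
      (starRingEnd ℂ) b * ρ j i * a + (starRingEnd ℂ) b * ρ j j * b := by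
  simp [star_add, mulVec_add, dotProduct_add, add_dotProduct, mulVec_single,
    ← Pi.single_star, single_dotProduct, dotProduct_single, star_star]
  ring

lemma herm_apply {d : ℕ} {ρ : Matrix (Fin d) (Fin d) ℂ} (h : ρ.IsHermitian) (i j : Fin d) :
    ρ j i = (starRingEnd ℂ) (ρ i j) := by
  have := congrFun (congrFun h.symm j) i
  simpa [conjTranspose_apply] using this

lemma diag_nonneg' {d : ℕ} {ρ : Matrix (Fin d) (Fin d) ℂ} (h : ρ.PosSemidef) (i : Fin d) :
    0 ≤ (ρ i i).re ∧ (ρ i i).im = 0 := by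
  have := h.dotProduct_mulVec_nonneg (Pi.single i 1)
  have e : star (Pi.single i (1:ℂ)) ⬝ᵥ ρ *ᵥ Pi.single i 1 = ρ i i := by
    simp [mulVec_single, ← Pi.single_star, single_dotProduct]
  rw [e] at this
  rw [Complex.le_def] at this
  exact ⟨by simpa using this.1, by simpa using this.2.symm⟩

lemma row_zero_of_diag_zero {d : ℕ} {ρ : Matrix (Fin d) (Fin d) ℂ} (h : ρ.PosSemidef)
    {j : Fin d} (hj : ρ j j = 0) (i : Fin d) : ρ i j = 0 := by
  have e : star (Pi.single j (1:ℂ)) ⬝ᵥ ρ *ᵥ Pi.single j 1 = ρ j j := by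
    simp [mulVec_single, ← Pi.single_star, single_dotProduct]
  have h0 : ρ *ᵥ Pi.single j 1 = 0 :=
    (h.dotProduct_mulVec_zero_iff _).mp (by rw [e, hj])
  have := congrFun h0 i
  simpa [mulVec_single] using this

lemma abs_sq_le_diag {d : ℕ} {ρ : Matrix (Fin d) (Fin d) ℂ} (h : ρ.PosSemidef) (i j : Fin d) :
    ‖ρ i j‖ ^ 2 ≤ (ρ i i).re * (ρ j j).re := by
  rcases eq_or_lt_of_le (diag_nonneg' h j).1 with hz | hpos
  · have hjj : ρ j j = 0 := Complex.ext (by simp [← hz]) (by simp [(diag_nonneg' h j).2])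
    simp [row_zero_of_diag_zero h hjj i, ← hz]
  · have key := h.dotProduct_mulVec_nonneg (Pi.single i (ρ j j) + Pi.single j (-(ρ j i)))
    rw [quadForm_pair] at key
    have hji : ρ j i = (starRingEnd ℂ) (ρ i j) := herm_apply h.1 i j
    have hjjr : ρ j j = ((ρ j j).re : ℂ) := Complex.ext rfl (by simp [(diag_nonneg' h j).2])
    set r : ℝ := (ρ j j).re with hr
    set c : ℂ := ρ i j with hc
    have key2eq : ρ j j = (r:ℂ) := hjjr
    have key2 : (0:ℂ) ≤ (r:ℂ) * ((r:ℂ) * ρ i i - (‖c‖ ^2 :ℝ)) := by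
      rw [key2eq] at key
      convert key using 1
      rw [hji]
      push_cast [Complex.sq_norm]
      rw [← Complex.mul_conj]
      simp only [Complex.conj_ofReal]
      ring
    rw [Complex.le_def] at key2
    have him : (ρ i i).im = 0 := (diag_nonneg' h i).2
    have : 0 ≤ r * (r * (ρ i i).re - ‖c‖ ^ 2) := by
      have := key2.1
      simpa [Complex.mul_re, him, ← Complex.ofReal_pow] using this
    nlinarith

lemma quadForm_rankOne {d : ℕ} (ψ x : Fin d → ℂ) :
    star x ⬝ᵥ (Matrix.of fun i j => ψ i * (starRingEnd ℂ) (ψ j)) *ᵥ x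
      = ((Complex.normSq (∑ j, (starRingEnd ℂ) (ψ j) * x j) : ℝ) : ℂ) := by
  rw [quadForm_expand]
  have : ∀ i j : Fin d, (starRingEnd ℂ) (x i) *
      (Matrix.of fun i j => ψ i * (starRingEnd ℂ) (ψ j)) i j * x j
      = ((starRingEnd ℂ) (x i) * ψ i) * ((starRingEnd ℂ) (ψ j) * x j) := by
    intro i j; simp only [Matrix.of_apply]; ring
  simp_rw [this]
  rw [← Finset.sum_mul_sum]
  have h1 : (∑ i, (starRingEnd ℂ) (x i) * ψ i)
      = (starRingEnd ℂ) (∑ j, (starRingEnd ℂ) (ψ j) * x j) := by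
    rw [map_sum]; refine Finset.sum_congr rfl fun j _ => ?_
    simp only [_root_.map_mul, Complex.conj_conj]; ring
  rw [h1, mul_comm, Complex.mul_conj]

lemma quadForm_diag {d : ℕ} (δ : Matrix (Fin d) (Fin d) ℂ) (hdiag : δ.IsDiag)
    (u : Fin d → ℂ) (hu : ∀ i, Complex.normSq (u i) = 1) :
    star u ⬝ᵥ δ *ᵥ u = δ.trace := by
  rw [quadForm_expand]
  have : ∀ i : Fin d, ∑ j, (starRingEnd ℂ) (u i) * δ i j * u j = δ i i := by
    intro i
    rw [Finset.sum_eq_single i]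
    · rw [show (starRingEnd ℂ) (u i) * δ i i * u i = δ i i * (u i * (starRingEnd ℂ) (u i)) by
        ring, Complex.mul_conj, hu i]
      simp
    · intro j _ hj
      rw [hdiag (Ne.symm hj)]
      ring
    · intro hi; exact absurd (Finset.mem_univ i) hi
  simp_rw [this]
  rfl

end Helpers
/-- The diagonally dominant comparison matrix is PSD. -/
lemma dd_psd {d : ℕ} {ρ : Matrix (Fin d) (Fin d) ℂ} (h : ρ.IsHermitian) :
    (Matrix.of fun i j => if i = j
        then ((∑ k, if i = k then 0 else ‖ρ i k‖ : ℝ) : ℂ)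
        else -ρ i j).PosSemidef := by
  set c : Fin d → ℝ := fun i => ∑ k, if i = k then 0 else ‖ρ i k‖ with hc
  set A : Matrix (Fin d) (Fin d) ℂ :=
    Matrix.of fun i j => if i = j then ((c i : ℝ) : ℂ) else -ρ i j with hA
  have hAij : ∀ i j, A i j = if i = j then ((c i : ℝ) : ℂ) else -ρ i j := fun i j => rfl
  have hAd : ∀ i, A i i = ((c i : ℝ) : ℂ) := fun i => by simp [hAij]
  have habs : ∀ i j, ‖ρ j i‖ = ‖ρ i j‖ := by
    intro i j; rw [herm_apply h i j, Complex.norm_conj]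
  have hAherm : A.IsHermitian := by
    ext i j
    simp only [conjTranspose_apply, hAij]
    rcases eq_or_ne i j with rfl | hij
    · simp
    · simp [if_neg (Ne.symm hij), if_neg hij, herm_apply h j i]
  refine PosSemidef.of_dotProduct_mulVec_nonneg hAherm fun x => ?_
  have hS := quadForm_expand A x
  set S : ℂ := star x ⬝ᵥ A *ᵥ x with hSdef
  have hSreal : (starRingEnd ℂ) S = S := by
    rw [hS, map_sum, Finset.sum_comm]
    refine Finset.sum_congr rfl fun i _ => ?_
    rw [map_sum]
    refine Finset.sum_congr rfl fun j _ => ?_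
    simp only [_root_.map_mul, Complex.conj_conj]
    rw [herm_apply hAherm i j]
    ring
  have him : S.im = 0 := Complex.conj_eq_iff_im.mp hSreal
  rw [Complex.le_def]
  refine ⟨?_, by simp [him]⟩
  simp only [Complex.zero_re]
  set n : Fin d → ℝ := fun i => ‖x i‖ with hn
  set r : Fin d → Fin d → ℝ := fun i j => ‖ρ i j‖ with hr
  have hre : S.re = ∑ i, ∑ j, ((starRingEnd ℂ) (x i) * A i j * x j).re := by
    rw [hS, Complex.re_sum]
    exact Finset.sum_congr rfl fun i _ => Complex.re_sum _ _
  set lb : Fin d → Fin d → ℝ :=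
    fun i j => if i = j then c i * n i ^ 2 else -(r i j * (n i * n j)) with hlb
  set m : Fin d → Fin d → ℝ :=
    fun i j => if i = j then 0 else r i j * (n i - n j) ^ 2 / 2 with hm
  have hterm : ∀ i j, lb i j ≤ ((starRingEnd ℂ) (x i) * A i j * x j).re := by
    intro i j
    rcases eq_or_ne i j with rfl | hij
    · simp only [hlb, if_pos rfl]
      rw [hAd i]
      have e1 : ((starRingEnd ℂ) (x i) * ((c i : ℝ) : ℂ) * x i).re
          = c i * Complex.normSq (x i) := by
        simp [Complex.mul_re, Complex.mul_im, Complex.normSq_apply]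
        try ring
      rw [e1, ← Complex.sq_norm]
      try simp [hn]
    · have hAoff : A i j = -ρ i j := by simp [hAij, hij]
      rw [hAoff]
      have hb : ‖((starRingEnd ℂ) (x i) * (-ρ i j) * x j)‖
          = r i j * (n i * n j) := by
        simp only [norm_mul, Complex.norm_conj, norm_neg, hr, hn]; ring
      have := (abs_le.1 (Complex.abs_re_le_norm ((starRingEnd ℂ) (x i) * (-ρ i j) * x j))).1
      simp only [hlb, if_neg hij]
      rw [← hb]
      linarith
  have hsum1 : ∑ i, ∑ j, lb i j ≤ S.re := by
    rw [hre]
    exact Finset.sum_le_sum fun i _ => Finset.sum_le_sum fun j _ => hterm i j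
  have hswap : ∀ (f : Fin d → ℝ),
      (∑ i, ∑ j, (if i = j then 0 else r i j * f j)) =
      (∑ i, ∑ j, (if i = j then 0 else r i j * f i)) := by
    intro f
    rw [Finset.sum_comm]
    refine Finset.sum_congr rfl fun i _ => Finset.sum_congr rfl fun j _ => ?_
    rcases eq_or_ne i j with rfl | hij
    · simp
    · rw [if_neg (Ne.symm hij), if_neg hij]
      have : r j i = r i j := habs i j
      rw [this]
  have hd1 : ∑ i, ∑ j, (if i = j then c i * n i ^ 2 else (0:ℝ)) = ∑ i, c i * n i ^ 2 := by
    refine Finset.sum_congr rfl fun i _ => ?_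
    rw [Finset.sum_ite_eq]
    simp
  have hd2 : ∑ i, ∑ j, (if i = j then (0:ℝ) else r i j * (n i ^ 2 / 2))
      = ∑ i, c i * (n i ^ 2 / 2) := by
    refine Finset.sum_congr rfl fun i _ => ?_
    have hci : c i = ∑ j, if i = j then (0:ℝ) else r i j := rfl
    rw [hci, Finset.sum_mul]
    refine Finset.sum_congr rfl fun j _ => ?_
    split_ifs with hij
    · simp
    · ring
  have hd3 : ∑ i, ∑ j, (if i = j then (0:ℝ) else r i j * (n j ^ 2 / 2))
      = ∑ i, c i * (n i ^ 2 / 2) := (hswap (fun k => n k ^ 2 / 2)).trans hd2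
  have hkey : ∑ i, ∑ j, lb i j = ∑ i, ∑ j, m i j := by
    have hpt : ∀ i j, lb i j - m i j =
        (if i = j then c i * n i ^ 2 else 0)
          - ((if i = j then 0 else r i j * (n i ^ 2 / 2))
            + (if i = j then 0 else r i j * (n j ^ 2 / 2))) := by
      intro i j
      simp only [hlb, hm]
      split_ifs with hij
      · ring
      · ring
    have hz : ∑ i, ∑ j, (lb i j - m i j) = 0 := by
      calc ∑ i, ∑ j, (lb i j - m i j)
          = ∑ i, ∑ j, ((if i = j then c i * n i ^ 2 else 0)
            - ((if i = j then 0 else r i j * (n i ^ 2 / 2))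
              + (if i = j then 0 else r i j * (n j ^ 2 / 2)))) :=
            Finset.sum_congr rfl fun i _ => Finset.sum_congr rfl fun j _ => hpt i j
        _ = 0 := by
            simp only [Finset.sum_sub_distrib, Finset.sum_add_distrib]
            rw [hd1, hd2, hd3]
            rw [← Finset.sum_add_distrib, ← Finset.sum_sub_distrib]
            exact Finset.sum_eq_zero fun i _ => by ring
    have := Finset.sum_sub_distrib (s := (Finset.univ : Finset (Fin d)))
      (f := fun i => ∑ j, lb i j) (g := fun i => ∑ j, m i j)
    rw [← sub_eq_zero]
    rw [← this]
    rw [← hz]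
    exact Finset.sum_congr rfl fun i _ =>
      (Finset.sum_sub_distrib (f := fun j => lb i j) (g := fun j => m i j)).symm
  have hmpos : 0 ≤ ∑ i, ∑ j, m i j := by
    refine Finset.sum_nonneg fun i _ => Finset.sum_nonneg fun j _ => ?_
    simp only [hm]
    split_ifs with hij
    · exact le_refl 0
    · have h1 : (0:ℝ) ≤ r i j := by simp only [hr]; exact norm_nonneg _
      positivity
  calc (0:ℝ) ≤ ∑ i, ∑ j, m i j := hmpos
    _ = ∑ i, ∑ j, lb i j := hkey.symm
    _ ≤ S.re := hsum1

lemma cl1_mem {d : ℕ} {ρ : Matrix (Fin d) (Fin d) ℂ} (hρ : IsState ρ) :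
    0 ≤ Cl1 ρ ∧ ∃ δ : Matrix (Fin d) (Fin d) ℂ,
      IsState δ ∧ δ.IsDiag ∧ ((1 + Cl1 ρ) • δ - ρ).PosSemidef := by
  set c : Fin d → ℝ := fun i => ∑ k, if i = k then 0 else ‖ρ i k‖ with hc
  have hc0 : ∀ i, 0 ≤ c i := by
    intro i
    refine Finset.sum_nonneg fun k _ => ?_
    split_ifs
    · exact le_refl 0
    · exact norm_nonneg _
  have hCl1 : Cl1 ρ = ∑ i, c i := rfl
  have hCl1n : 0 ≤ Cl1 ρ := by
    rw [hCl1]; exact Finset.sum_nonneg fun i _ => hc0 i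
  refine ⟨hCl1n, ?_⟩
  set a : Fin d → ℝ := fun i => (ρ i i).re with ha
  have ha0 : ∀ i, 0 ≤ a i := fun i => (diag_nonneg' hρ.1 i).1
  have hdiagC : ∀ i, ρ i i = ((a i : ℝ) : ℂ) :=
    fun i => Complex.ext rfl (by simp [(diag_nonneg' hρ.1 i).2])
  have hsa : ∑ i, a i = 1 := by
    have htr : ∑ i, ρ i i = 1 := hρ.2
    have := congrArg Complex.re htr
    rw [Complex.re_sum] at this
    simpa using this
  have hT : (0:ℝ) < 1 + Cl1 ρ := by linarith
  set T : ℝ := 1 + Cl1 ρ with hTdef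
  refine ⟨Matrix.diagonal (fun i => (((a i + c i)/T : ℝ) : ℂ)), ⟨?_, ?_⟩, Matrix.isDiag_diagonal _, ?_⟩
  · refine Matrix.PosSemidef.diagonal fun i => ?_
    simp only [Pi.zero_apply]
    rw [Complex.zero_le_real]
    exact div_nonneg (add_nonneg (ha0 i) (hc0 i)) hT.le
  · rw [Matrix.trace_diagonal]
    rw [show ∑ i, (((a i + c i)/T : ℝ) : ℂ) = (((∑ i, (a i + c i))/T : ℝ) : ℂ) by
      push_cast [Finset.sum_div]; ring]
    rw [Finset.sum_add_distrib, hsa, ← hCl1]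
    norm_cast
    field_simp
    exact hTdef.symm
  · have hmat : (1 + Cl1 ρ) • (Matrix.diagonal (fun i => (((a i + c i)/T : ℝ) : ℂ))) - ρ
        = Matrix.of fun i j => if i = j
            then ((∑ k, if i = k then 0 else ‖ρ i k‖ : ℝ) : ℂ)
            else -ρ i j := by
      ext i j
      simp only [Matrix.sub_apply, Matrix.smul_apply, Matrix.diagonal_apply, Matrix.of_apply]
      rcases eq_or_ne i j with rfl | hij
      · rw [if_pos rfl, if_pos rfl, hdiagC i]
        rw [Complex.real_smul]
        rw [show ((∑ k, if i = k then 0 else ‖ρ i k‖ : ℝ) : ℂ) = ((c i : ℝ):ℂ) from rfl]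
        push_cast
        rw [hTdef]
        field_simp
        push_cast; ring
      · rw [if_neg hij, if_neg hij]
        simp
    rw [hmat]
    exact dd_psd hρ.1.1

theorem roc_maximal_iff_maximally_coherent {d : ℕ} (hd : 2 ≤ d)
    (ρ : Matrix (Fin d) (Fin d) ℂ) (hρ : IsState ρ) :
    RoC ρ = (d : ℝ) - 1 ↔
      ∃ ψ : Fin d → ℂ, (∑ j, ‖ψ j‖ ^ 2 = 1) ∧
        (∀ j, ‖ψ j‖ = 1 / Real.sqrt d) ∧
        ρ = Matrix.of fun i j => ψ i * star (ψ j) := by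
  have hd0 : (0:ℝ) < d := by positivity
  have hd1 : (1:ℝ) ≤ d := by exact_mod_cast Nat.one_le_of_lt hd
  have hdne : (d:ℝ) ≠ 0 := ne_of_gt hd0
  have hdneC : (d:ℂ) ≠ 0 := Nat.cast_ne_zero.mpr (by omega)
  have hbdd : BddBelow { s : ℝ | 0 ≤ s ∧ ∃ δ : Matrix (Fin d) (Fin d) ℂ,
      IsState δ ∧ δ.IsDiag ∧ ((1 + s) • δ - ρ).PosSemidef } := ⟨0, fun s hs => hs.1⟩
  constructor
  · intro hR
    have hmemCl1 := cl1_mem hρ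
    have hle0 : RoC ρ ≤ Cl1 ρ := csInf_le hbdd hmemCl1
    have hge : (d:ℝ) - 1 ≤ Cl1 ρ := by rw [hR] at hle0; exact hle0
    set a : Fin d → ℝ := fun i => (ρ i i).re with ha
    have ha0 : ∀ i, 0 ≤ a i := fun i => (diag_nonneg' hρ.1 i).1
    have hsa : ∑ i, a i = 1 := by
      have h1 : ∑ i, ρ i i = 1 := by rw [← hρ.2]; simp [Matrix.trace, Matrix.diag]
      have := congrArg Complex.re h1
      rw [Complex.re_sum] at this
      simpa using this
    have hpt : ∀ i j : Fin d, (if i = j then (0:ℝ) else ‖ρ i j‖) ≤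
        (if i = j then 0 else (a i + a j)/2) := by
      intro i j
      split_ifs with hij
      · exact le_refl 0
      · have h1 := abs_sq_le_diag hρ.1 i j
        have h2 := norm_nonneg (ρ i j)
        have e1 : a i = (ρ i i).re := rfl
        have e2 : a j = (ρ j j).re := rfl
        rw [e1, e2]
        nlinarith [sq_nonneg ((ρ i i).re - (ρ j j).re), ha0 i, ha0 j, e1, e2]
    have hg : ∑ i : Fin d, ∑ j : Fin d, (if i = j then (0:ℝ) else (a i + a j)/2)
        = (d:ℝ) - 1 := by
      have hrow : ∀ i : Fin d, ∑ j : Fin d, (if i = j then (0:ℝ) else (a i + a j)/2)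
          = ((d:ℝ) - 2)/2 * a i + 1/2 := by
        intro i
        have e : ∀ j : Fin d, (if i = j then (0:ℝ) else (a i + a j)/2)
            = (a i + a j)/2 - (if i = j then (a i + a j)/2 else 0) := by
          intro j; split_ifs <;> ring
        simp_rw [e]
        rw [Finset.sum_sub_distrib, Finset.sum_ite_eq]
        have e2 : ∑ j : Fin d, (a i + a j)/2 = ((d:ℝ) * a i + 1)/2 := by
          rw [← Finset.sum_div, Finset.sum_add_distrib, Finset.sum_const, hsa]
          simp [Finset.card_univ]
        rw [e2]
        simp only [Finset.mem_univ, if_pos]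
        ring
      rw [Finset.sum_congr rfl fun i (_ : i ∈ Finset.univ) => hrow i]
      rw [Finset.sum_add_distrib, ← Finset.mul_sum, hsa, Finset.sum_const]
      simp [Finset.card_univ]
      ring
    have hle2 : ∀ i : Fin d, (∑ j, (if i = j then (0:ℝ) else ‖ρ i j‖))
        ≤ ∑ j, (if i = j then (0:ℝ) else (a i + a j)/2) :=
      fun i => Finset.sum_le_sum fun j _ => hpt i j
    have hCl1e : Cl1 ρ = ∑ i : Fin d, ∑ j : Fin d,
        (if i = j then (0:ℝ) else ‖ρ i j‖) := rfl
    have hsumeq : ∑ i : Fin d, ∑ j : Fin d, (if i = j then (0:ℝ) else ‖ρ i j‖)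
        = ∑ i : Fin d, ∑ j : Fin d, (if i = j then (0:ℝ) else (a i + a j)/2) := by
      refine le_antisymm (Finset.sum_le_sum fun i _ => hle2 i) ?_
      rw [hg, ← hCl1e]
      exact hge
    have hrows := (Finset.sum_eq_sum_iff_of_le (fun i _ => hle2 i)).1 hsumeq
    have heq' : ∀ i j : Fin d, i ≠ j → ‖ρ i j‖ = (a i + a j)/2 := by
      intro i j hij
      have := (Finset.sum_eq_sum_iff_of_le (fun j _ => hpt i j)).1
        (hrows i (Finset.mem_univ i)) j (Finset.mem_univ j)
      simpa [hij] using this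
    have haeq : ∀ i j : Fin d, a i = a j := by
      intro i j
      rcases eq_or_ne i j with rfl | hij
      · rfl
      · have h1 := abs_sq_le_diag hρ.1 i j
        have h2 := heq' i j hij
        nlinarith [ha0 i, ha0 j]
    have haval : ∀ i, a i = 1/(d:ℝ) := by
      intro i
      have h1 : ∑ j : Fin d, a j = ∑ j : Fin d, a i :=
        Finset.sum_congr rfl fun j _ => haeq j i
      rw [hsa, Finset.sum_const, Finset.card_univ, Fintype.card_fin, nsmul_eq_mul] at h1
      rw [eq_div_iff hdne]
      linarith
    have hdiagC : ∀ i, ρ i i = ((1/(d:ℝ) : ℝ) : ℂ) := by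
      intro i
      refine Complex.ext ?_ ?_
      · simpa using haval i
      · simpa using (diag_nonneg' hρ.1 i).2
    have habs_all : ∀ i j, ‖ρ i j‖ = 1/(d:ℝ) := by
      intro i j
      rcases eq_or_ne i j with rfl | hij
      · rw [hdiagC i, Complex.norm_real, Real.norm_eq_abs, abs_of_nonneg (by positivity)]
      · rw [heq' i j hij, haval i, haval j]; ring
    have hz2 : (0:ℕ) < d := by omega
    set z : Fin d := ⟨0, hz2⟩ with hzdef
    set q : ℂ := ((1/(d:ℝ) : ℝ) : ℂ) with hq
    have hqd : (d:ℂ) * q = 1 := by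
      rw [hq]; push_cast; field_simp
    have hqc : (starRingEnd ℂ) q = q := by rw [hq]; exact Complex.conj_ofReal _
    have hclaim : ∀ i j : Fin d, ρ i j = (d:ℂ) * (ρ i z * (starRingEnd ℂ) (ρ j z)) := by
      intro i j
      rcases eq_or_ne j z with hjz | hjz
      · rw [hjz, hdiagC z, hqc]
        rw [show (d:ℂ) * (ρ i z * q) = ((d:ℂ) * q) * ρ i z by ring, hqd, one_mul]
      · set cc : ℂ := ρ j z with hcc
        have hcz : ρ z j = (starRingEnd ℂ) cc := herm_apply hρ.1.1 j z
        have hccsq : cc * (starRingEnd ℂ) cc = q^2 := by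
          rw [Complex.mul_conj]
          rw [show Complex.normSq cc = (1/(d:ℝ))^2 by
            rw [← Complex.sq_norm, hcc, habs_all j z]]
          rw [hq]; push_cast; ring
        have hform : star (Pi.single z (-(starRingEnd ℂ) cc) + Pi.single j q) ⬝ᵥ
            ρ *ᵥ (Pi.single z (-(starRingEnd ℂ) cc) + Pi.single j q) = 0 := by
          rw [quadForm_pair, hdiagC z, hdiagC j, hcz, ← hcc]
          simp only [map_neg, Complex.conj_conj, hqc]
          linear_combination (-q) * hccsq
        have hmv := (hρ.1.dotProduct_mulVec_zero_iff _).mp hform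
        have hrow := congrFun hmv i
        simp only [mulVec_add, mulVec_single, Pi.add_apply, Pi.zero_apply] at hrow
        simp only [Pi.smul_apply, Matrix.col_apply, op_smul_eq_mul] at hrow
        have hsolve : ρ i j * q = ρ i z * (starRingEnd ℂ) cc := by
          linear_combination hrow
        rw [show ρ i j = ((d:ℂ) * q) * ρ i j by rw [hqd]; ring]
        rw [show ((d:ℂ) * q) * ρ i j = (d:ℂ) * (ρ i j * q) by ring, hsolve, hcc]
    have hsq0 : (0:ℝ) < Real.sqrt d := Real.sqrt_pos.mpr hd0
    have hss : Real.sqrt d * Real.sqrt d = (d:ℝ) := Real.mul_self_sqrt hd0.le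
    have habsψ : ∀ j : Fin d, ‖((Real.sqrt d : ℝ):ℂ) * ρ j z‖
        = 1/Real.sqrt d := by
      intro j
      rw [norm_mul, Complex.norm_real, Real.norm_eq_abs, abs_of_nonneg (Real.sqrt_nonneg _),
        habs_all j z]
      rw [eq_div_iff (ne_of_gt hsq0)]
      field_simp
      exact Real.sq_sqrt hd0.le
    refine ⟨fun j => ((Real.sqrt d : ℝ) : ℂ) * ρ j z, ?_, habsψ, ?_⟩
    · simp only [habsψ]
      rw [Finset.sum_const, Finset.card_univ, Fintype.card_fin, nsmul_eq_mul]
      rw [div_pow, one_pow, Real.sq_sqrt hd0.le]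
      field_simp
    · ext i j
      simp only [Matrix.of_apply]
      rw [Complex.star_def, _root_.map_mul, Complex.conj_ofReal]
      rw [hclaim i j]
      have hssC : ((Real.sqrt d : ℝ):ℂ) * ((Real.sqrt d : ℝ):ℂ) = (d:ℂ) := by
        rw [← Complex.ofReal_mul, hss]
        push_cast
        rfl
      linear_combination (-(ρ i z * (starRingEnd ℂ) (ρ j z))) * hssC
  · rintro ⟨ψ, hnorm, habsψ, hρeq⟩
    have hsq0 : (0:ℝ) < Real.sqrt d := Real.sqrt_pos.mpr hd0
    have hss : Real.sqrt d * Real.sqrt d = d := Real.mul_self_sqrt hd0.le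
    have hnormSqψ : ∀ j, Complex.normSq (ψ j) = 1/d := by
      intro j
      rw [← Complex.sq_norm, habsψ j, div_pow, one_pow, Real.sq_sqrt hd0.le]
    have hsumSq : ∑ j, Complex.normSq (ψ j) = 1 := by
      rw [← hnorm]
      exact Finset.sum_congr rfl fun j _ => (Complex.sq_norm _).symm
    have hρof : ρ = Matrix.of fun i j => ψ i * (starRingEnd ℂ) (ψ j) := hρeq
    set u : Fin d → ℂ := fun j => ((Real.sqrt d : ℝ) : ℂ) * ψ j with hu
    have hu1 : ∀ i, Complex.normSq (u i) = 1 := by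
      intro i
      rw [hu]
      simp only [Complex.normSq_mul, Complex.normSq_ofReal, hnormSqψ i]
      field_simp
      exact Real.sq_sqrt hd0.le
    -- the inner product of ψ with u
    have htu : (∑ j, (starRingEnd ℂ) (ψ j) * u j) = ((Real.sqrt d : ℝ) : ℂ) := by
      rw [hu]
      have : ∀ j : Fin d, (starRingEnd ℂ) (ψ j) * (((Real.sqrt d : ℝ) : ℂ) * ψ j)
          = ((Real.sqrt d : ℝ) : ℂ) * ((Complex.normSq (ψ j) : ℝ) : ℂ) := by
        intro j
        rw [show (starRingEnd ℂ) (ψ j) * (((Real.sqrt d : ℝ) : ℂ) * ψ j)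
          = ((Real.sqrt d : ℝ) : ℂ) * (ψ j * (starRingEnd ℂ) (ψ j)) by ring, Complex.mul_conj]
      simp_rw [this]
      rw [← Finset.mul_sum]
      rw [show (∑ j, ((Complex.normSq (ψ j) : ℝ) : ℂ)) = ((∑ j, Complex.normSq (ψ j) : ℝ) : ℂ) by
        push_cast; rfl]
      rw [hsumSq]
      simp
    -- membership of d - 1
    have hmem : ((d:ℝ) - 1) ∈ { s : ℝ | 0 ≤ s ∧ ∃ δ : Matrix (Fin d) (Fin d) ℂ,
        IsState δ ∧ δ.IsDiag ∧ ((1 + s) • δ - ρ).PosSemidef } := by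
      refine ⟨by linarith, Matrix.diagonal (fun _ : Fin d => (((d:ℝ)⁻¹ : ℝ) : ℂ)), ⟨?_, ?_⟩,
        Matrix.isDiag_diagonal _, ?_⟩
      · refine Matrix.PosSemidef.diagonal fun i => ?_
        simp only [Pi.zero_apply]
        rw [Complex.zero_le_real]
        positivity
      · rw [Matrix.trace_diagonal]
        rw [Finset.sum_const]
        simp only [Finset.card_univ, Fintype.card_fin, nsmul_eq_mul]
        push_cast
        field_simp
      · have hmat : (1 + ((d:ℝ) - 1)) • (Matrix.diagonal (fun _ : Fin d => (((d:ℝ)⁻¹ : ℝ) : ℂ))) - ρ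
            = 1 - ρ := by
          ext i j
          simp only [Matrix.sub_apply, Matrix.smul_apply, Matrix.diagonal_apply,
            Matrix.one_apply]
          rcases eq_or_ne i j with rfl | hij
          · rw [if_pos rfl, if_pos rfl, Complex.real_smul]
            push_cast
            field_simp
            ring
          · rw [if_neg hij, if_neg hij]
            simp
        rw [hmat]
        refine PosSemidef.of_dotProduct_mulVec_nonneg ?_ ?_
        · have : ρ.IsHermitian := hρ.1.1
          exact (Matrix.isHermitian_one).sub this
        · intro x
          rw [sub_mulVec, dotProduct_sub, one_mulVec]
          have hsx : star x ⬝ᵥ x = ((∑ i, Complex.normSq (x i) : ℝ) : ℂ) := by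
            push_cast
            simp only [dotProduct, Pi.star_apply]
            refine Finset.sum_congr rfl fun i _ => ?_
            rw [← Complex.mul_conj]
            simp [Complex.star_def, mul_comm]
          rw [hsx, hρof, quadForm_rankOne]
          rw [← Complex.ofReal_sub, Complex.zero_le_real]
          -- Cauchy-Schwarz
          set t : ℂ := ∑ j, (starRingEnd ℂ) (ψ j) * x j with ht
          have hCS : Complex.normSq t ≤ ∑ i, Complex.normSq (x i) := by
            have hip : (inner (𝕜 := ℂ) ((WithLp.equiv 2 (Fin d → ℂ)).symm ψ)
                ((WithLp.equiv 2 (Fin d → ℂ)).symm x)) = t := by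
              rw [ht]
              simp [PiLp.inner_apply, RCLike.inner_apply]
              exact Finset.sum_congr rfl fun j _ => mul_comm _ _
            have hnψ : ‖(WithLp.equiv 2 (Fin d → ℂ)).symm ψ‖ = 1 := by
              rw [EuclideanSpace.norm_eq]
              rw [show (∑ i, ‖(WithLp.equiv 2 (Fin d → ℂ)).symm ψ i‖^2) = (1:ℝ) by
                rw [← hsumSq]
                refine Finset.sum_congr rfl fun i _ => ?_
                rw [WithLp.equiv_symm_apply, PiLp.toLp_apply, Complex.sq_norm]]
              exact Real.sqrt_one
            have hnx : ‖(WithLp.equiv 2 (Fin d → ℂ)).symm x‖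
                = Real.sqrt (∑ i, Complex.normSq (x i)) := by
              rw [EuclideanSpace.norm_eq]
              congr 1
              refine Finset.sum_congr rfl fun i _ => ?_
              rw [WithLp.equiv_symm_apply, PiLp.toLp_apply, Complex.sq_norm]
            have := norm_inner_le_norm (𝕜 := ℂ) ((WithLp.equiv 2 (Fin d → ℂ)).symm ψ)
              ((WithLp.equiv 2 (Fin d → ℂ)).symm x)
            rw [hip, hnψ, hnx, one_mul] at this
            have h2 : ‖t‖^2 ≤ Real.sqrt (∑ i, Complex.normSq (x i)) ^ 2 := by
              exact pow_le_pow_left₀ (norm_nonneg t) this 2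
            rw [Real.sq_sqrt (Finset.sum_nonneg fun i _ => Complex.normSq_nonneg _)] at h2
            calc Complex.normSq t = ‖t‖^2 := by
                  rw [Complex.sq_norm]
              _ ≤ _ := h2
          linarith
    -- lower bound
    have hlow : ∀ s ∈ { s : ℝ | 0 ≤ s ∧ ∃ δ : Matrix (Fin d) (Fin d) ℂ,
        IsState δ ∧ δ.IsDiag ∧ ((1 + s) • δ - ρ).PosSemidef }, (d:ℝ) - 1 ≤ s := by
      rintro s ⟨hs0, δ, hδstate, hδdiag, hpsd⟩
      have hform := hpsd.dotProduct_mulVec_nonneg u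
      rw [sub_mulVec, dotProduct_sub] at hform
      have hδu : star u ⬝ᵥ ((1 + s) • δ) *ᵥ u = (((1 + s) : ℝ) : ℂ) := by
        rw [smul_mulVec, dotProduct_smul]
        rw [quadForm_diag δ hδdiag u hu1, hδstate.2]
        rw [Complex.real_smul]
        simp
      have hρu : star u ⬝ᵥ ρ *ᵥ u = ((d:ℝ) : ℂ) := by
        rw [hρof, quadForm_rankOne, htu]
        rw [Complex.normSq_ofReal]
        norm_cast
      rw [hδu, hρu, ← Complex.ofReal_sub, Complex.zero_le_real] at hform
      linarith
    rw [RoC]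
    exact le_antisymm (csInf_le hbdd hmem) (le_csInf ⟨_, hmem⟩ hlow)
end
end

section
/- Explicit incoherent decomposition achieving the ℓ1 upper bound: let d ≥ 2 and let ρ be a state on ℂ^d. Then there exists a positive semidefinite d×d complex matrix T with trace Tr[T] = C_ℓ1(ρ) such that ρ + T is a diagonal matrix. -/
open Matrix ComplexOrder

noncomputable section

lemma aux_nonneg {d : ℕ} (r : Fin d → Fin d → ℝ) (a : Fin d → ℝ)
    (hr0 : ∀ i j, 0 ≤ r i j) (hrs : ∀ i j, r i j = r j i) :
    0 ≤ ∑ i, ∑ j, (if i = j then 0 else r i j * (a i ^ 2 - a i * a j)) := by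
  have h2 : 2 * (∑ i, ∑ j, (if i = j then 0 else r i j * (a i ^ 2 - a i * a j)))
      = ∑ i, ∑ j, (if i = j then 0 else r i j * (a i - a j) ^ 2) := by
    rw [two_mul]
    nth_rewrite 2 [Finset.sum_comm]
    rw [← Finset.sum_add_distrib]
    refine Finset.sum_congr rfl fun i _ => ?_
    rw [← Finset.sum_add_distrib]
    refine Finset.sum_congr rfl fun j _ => ?_
    by_cases h : i = j
    · simp [h]
    · rw [if_neg h, if_neg (Ne.symm h), if_neg h, hrs j i]
      ring
  have h3 : 0 ≤ ∑ i, ∑ j, (if i = j then 0 else r i j * (a i - a j) ^ 2) := by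
    refine Finset.sum_nonneg fun i _ => Finset.sum_nonneg fun j _ => ?_
    by_cases h : i = j
    · simp [h]
    · rw [if_neg h]
      exact mul_nonneg (hr0 i j) (sq_nonneg _)
  linarith

theorem exists_incoherent_decomposition {d : ℕ} (hd : 2 ≤ d)
    (ρ : Matrix (Fin d) (Fin d) ℂ) (hρ : IsState ρ) :
    ∃ T : Matrix (Fin d) (Fin d) ℂ, T.PosSemidef ∧ T.trace = (Cl1 ρ : ℂ) ∧
      (ρ + T).IsDiag := by
  obtain ⟨⟨hherm, _⟩, _⟩ := hρ
  set T : Matrix (Fin d) (Fin d) ℂ := Matrix.of fun i j =>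
    if i = j then (∑ k, if i = k then 0 else ((‖ρ i k‖ : ℝ) : ℂ)) else -ρ i j with hTdef
  have hsymm : ∀ i j, ‖ρ j i‖ = ‖ρ i j‖ := by
    intro i j
    rw [← hherm.apply i j]
    simp
  have hTherm : T.IsHermitian := by
    ext i j
    simp only [conjTranspose_apply, hTdef, Matrix.of_apply]
    by_cases h : i = j
    · subst h; simp [star_sum, apply_ite (star : ℂ → ℂ)]
    · rw [if_neg h, if_neg (Ne.symm h), star_neg, hherm.apply]
  refine ⟨T, posSemidef_iff_dotProduct_mulVec.2 ⟨hTherm, ?_⟩, ?_, ?_⟩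
  · -- PSD quadratic form
    intro x
    set z := star x ⬝ᵥ T *ᵥ x with hz
    have hzstar : star z = z := by
      rw [hz]
      calc star (star x ⬝ᵥ T *ᵥ x) = star (T *ᵥ x) ⬝ᵥ x := by
            rw [← star_dotProduct_star, star_star]
        _ = star x ᵥ* Tᴴ ⬝ᵥ x := by rw [star_mulVec]
        _ = star x ⬝ᵥ Tᴴ *ᵥ x := by rw [← dotProduct_mulVec]
        _ = star x ⬝ᵥ T *ᵥ x := by rw [hTherm.eq]
    rw [Complex.le_def]
    refine ⟨?_, ?_⟩
    swap
    · have := congrArg Complex.im hzstar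
      simp only [Complex.star_def, Complex.conj_im] at this
      simp only [Complex.zero_im]
      linarith
    simp only [Complex.zero_re]
    set a : Fin d → ℝ := fun i => ‖x i‖ with ha
    set r : Fin d → Fin d → ℝ := fun i j => ‖ρ i j‖ with hr
    have hzre : z.re = ∑ i, ∑ j, (starRingEnd ℂ (x i) * T i j * x j).re := by
      rw [hz, dotProduct, Complex.re_sum]
      refine Finset.sum_congr rfl fun i _ => ?_
      rw [mulVec, dotProduct, Finset.mul_sum, Complex.re_sum]
      refine Finset.sum_congr rfl fun j _ => ?_
      congr 1
      simp only [Pi.star_apply, Complex.star_def]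
      ring
    have key : ∀ i j, (if i = j then (∑ k, if i = k then 0 else r i k) * a i ^ 2
        else -(r i j * (a i * a j))) ≤ (starRingEnd ℂ (x i) * T i j * x j).re := by
      intro i j
      by_cases h : i = j
      · subst h
        rw [if_pos rfl]
        have hS : (∑ k, if i = k then 0 else ((‖ρ i k‖ : ℝ) : ℂ))
            = (((∑ k, if i = k then 0 else r i k) : ℝ) : ℂ) := by
          rw [Complex.ofReal_sum]
          refine Finset.sum_congr rfl fun k _ => ?_
          by_cases hk : i = k <;> simp [hk, hr]
        have heq : starRingEnd ℂ (x i) * T i i * x i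
            = (((∑ k, if i = k then 0 else r i k) * a i ^ 2 : ℝ) : ℂ) := by
          simp only [hTdef, Matrix.of_apply, eq_self_iff_true, if_true, hS]
          rw [show starRingEnd ℂ (x i) * (((∑ k, if i = k then 0 else r i k) : ℝ) : ℂ) * x i
            = (((∑ k, if i = k then 0 else r i k) : ℝ) : ℂ) * (x i * starRingEnd ℂ (x i)) by ring,
            Complex.mul_conj, ← Complex.ofReal_mul]
          congr 1
          rw [Complex.normSq_eq_norm_sq]
        rw [heq, Complex.ofReal_re]
      · rw [if_neg h]
        have hb : ‖starRingEnd ℂ (x i) * T i j * x j‖ = r i j * (a i * a j) := by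
          simp only [hTdef, Matrix.of_apply, if_neg h, norm_neg, norm_mul, Complex.norm_conj]
          simp only [hr, ha]
          ring
        calc -(r i j * (a i * a j)) = -‖starRingEnd ℂ (x i) * T i j * x j‖ := by
              rw [hb]
          _ ≤ (starRingEnd ℂ (x i) * T i j * x j).re :=
              (abs_le.1 (Complex.abs_re_le_norm _)).1
    have hge : ∑ i, ∑ j, (if i = j then (∑ k, if i = k then 0 else r i k) * a i ^ 2
        else -(r i j * (a i * a j))) ≤ z.re := by
      rw [hzre]
      exact Finset.sum_le_sum fun i _ => Finset.sum_le_sum fun j _ => key i j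
    have hrw : ∑ i, ∑ j, (if i = j then (∑ k, if i = k then 0 else r i k) * a i ^ 2
        else -(r i j * (a i * a j)))
        = ∑ i, ∑ j, (if i = j then 0 else r i j * (a i ^ 2 - a i * a j)) := by
      refine Finset.sum_congr rfl fun i _ => ?_
      have e1 : ∑ j, (if i = j then (∑ k, if i = k then 0 else r i k) * a i ^ 2
          else -(r i j * (a i * a j)))
          = (∑ j, if i = j then (∑ k, if i = k then 0 else r i k) * a i ^ 2 else 0)
            + ∑ j, (if i = j then 0 else -(r i j * (a i * a j))) := by
        rw [← Finset.sum_add_distrib]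
        refine Finset.sum_congr rfl fun j _ => ?_
        by_cases h : i = j <;> simp [h]
      rw [e1, Finset.sum_ite_eq, if_pos (Finset.mem_univ i)]
      rw [Finset.sum_mul, ← Finset.sum_add_distrib]
      refine Finset.sum_congr rfl fun j _ => ?_
      by_cases h : i = j
      · simp [h]
      · rw [if_neg h, if_neg h, if_neg h]
        ring
    rw [hrw] at hge
    have := aux_nonneg r a (fun i j => norm_nonneg _) (fun i j => (hsymm j i))
    linarith
  · -- trace
    have : T.trace = ∑ i, ∑ k, if i = k then 0 else ((‖ρ i k‖ : ℝ) : ℂ) := by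
      simp [trace, diag, hTdef]
    rw [this, Cl1, Complex.ofReal_sum]
    refine Finset.sum_congr rfl fun i _ => ?_
    rw [Complex.ofReal_sum]
    refine Finset.sum_congr rfl fun j _ => ?_
    by_cases h : i = j <;> simp [h]
  · -- diagonal
    intro i j h
    simp [hTdef, Matrix.add_apply, if_neg h]
end
end
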